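/- In a cycle graph with SO(3) measurements, the point R₁* = I, R_i* = (∏_{s=1}^{i−1} R̃_{s,s+1})ᵀ E₀^{i−1} for i = 2,…,n, where E₀ is the n-th root of the cycle error E with angle γ/n, is a global minimizer of the rotation averaging problem min_{R∈SO(3)ⁿ} −⟨RRᵀ, Ã⟩, and the residual angle on every edge equals γ/n. -/

import Mathlib

open Matrix

open Real

/-- The `(i,j)` block of an `np × np` block matrix. -/
def blk {n p : ℕ} (M : Matrix (Fin n × Fin p) (Fin n × Fin p) ℝ) (i j : Fin n) :
    Matrix (Fin p) (Fin p) ℝ := fun a b => M (i, a) (j, b)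

/-- The `i`-th `p × p` block of a stacked `np × p` block column matrix. -/
def blkv {n p : ℕ} (R : Matrix (Fin n × Fin p) (Fin p) ℝ) (i : Fin n) :
    Matrix (Fin p) (Fin p) ℝ := fun a b => R (i, a) b

open Finset Complex

lemma root_sum (n : ℕ) (η : ℂ) (hη : η ^ n = 1) :
    ∑ k : Fin n, η ^ (k : ℕ) = if η = 1 then (n : ℂ) else 0 := by
  rw [Fin.sum_univ_eq_sum_range]
  split_ifs with h
  · subst h; simp
  · rw [geom_sum_eq h, hη]; simp

lemma trig_bound (n : ℕ) (hn : 0 < n) (β : ℝ) (hβ : |β| ≤ π)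
    (hcb : Real.cos (π / n) ≤ Real.cos β) (k : ℕ) (hk : k < n) :
    Real.cos (β - 2 * π * k / n) ≤ Real.cos β := by
  have hπn0 : 0 < π / n := div_pos Real.pi_pos (by positivity)
  have hπn : π / n ≤ π := by
    rw [div_le_iff₀ (by positivity)]
    nlinarith [Real.pi_pos, (by exact_mod_cast hn : (1:ℝ) ≤ n)]
  rcases Nat.eq_zero_or_pos k with hk0 | hk1
  · subst hk0; simp
  -- |β| ≤ π/n
  have hβn : |β| ≤ π / n := by
    by_contra hcon
    push_neg at hcon
    have := Real.cos_lt_cos_of_nonneg_of_le_pi (le_of_lt hπn0) hβ hcon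
    rw [Real.cos_abs] at this
    linarith
  have hn' : (1:ℝ) ≤ (n:ℝ) := by exact_mod_cast hn
  have hk1' : (1:ℝ) ≤ (k:ℝ) := by exact_mod_cast hk1
  have hkn : (k:ℝ) ≤ (n:ℝ) - 1 := by
    have : (k:ℝ) + 1 ≤ n := by exact_mod_cast hk
    linarith
  set θ := 2 * π * k / n - β with hθ
  have hβ1 : -(π/n) ≤ β := (abs_le.mp hβn).1
  have hβ2 : β ≤ π/n := (abs_le.mp hβn).2
  have hnp : (0:ℝ) < n := by positivity
  have h2k : 2 * π / n ≤ 2 * π * k / n := by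
    rw [div_le_div_iff₀ hnp hnp]
    have h1 : 0 ≤ π * ((k:ℝ) - 1) * n :=
      mul_nonneg (mul_nonneg Real.pi_pos.le (by linarith)) hnp.le
    nlinarith [Real.pi_pos]
  have h2k' : 2 * π * k / n ≤ 2 * π - 2 * π / n := by
    rw [show 2 * π - 2 * π / (n:ℝ) = (2 * π * n - 2 * π)/n by field_simp,
      div_le_div_iff₀ hnp hnp]
    have h1 : 0 ≤ π * ((n:ℝ) - 1 - k) * n :=
      mul_nonneg (mul_nonneg Real.pi_pos.le (by linarith)) hnp.le
    nlinarith [Real.pi_pos]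
  have hθ1 : π / n ≤ θ := by
    have : 2 * π / n = 2 * (π / n) := by ring
    rw [hθ]; rw [this] at h2k; linarith
  have hθ2 : θ ≤ 2 * π - π / n := by
    have : 2 * π / n = 2 * (π / n) := by ring
    rw [hθ]; rw [this] at h2k'; linarith
  have key : Real.cos θ ≤ Real.cos (π / n) := by
    rcases le_or_gt θ π with hle | hgt
    · exact Real.cos_le_cos_of_nonneg_of_le_pi (le_of_lt hπn0) hle hθ1
    · have : Real.cos θ = Real.cos (2 * π - (2 * π - θ)) := by ring_nf
      rw [show θ = 2 * π - (2 * π - θ) by ring, Real.cos_two_pi_sub]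
      apply Real.cos_le_cos_of_nonneg_of_le_pi (le_of_lt hπn0)
      · linarith
      · linarith
  have : Real.cos (β - 2 * π * k / n) = Real.cos θ := by
    rw [hθ, show β - 2 * π * k / n = -(2 * π * k / n - β) by ring, Real.cos_neg]
  rw [this]
  exact key.trans hcb

lemma wirtinger (n : ℕ) (hn : 0 < n) (ε : ℂ) (hεa : ‖ε‖ = 1)
    (hre : Real.cos (π / n) ≤ ε.re) (ζ : Fin n → ℂ) :
    ∑ i : Fin n, (ε * (starRingEnd ℂ) (ζ i) * ζ ⟨(i.1 + 1) % n, Nat.mod_lt _ hn⟩).re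
      ≤ ε.re * ∑ i : Fin n, Complex.normSq (ζ i) := by
  set ω := Complex.exp (2 * ↑π * I / n) with hω
  have hprim : IsPrimitiveRoot ω n := Complex.isPrimitiveRoot_exp n hn.ne'
  have hωn : ω ^ n = 1 := hprim.pow_eq_one
  set χ := (starRingEnd ℂ) ω with hχ
  have hωabs : ‖ω‖ = 1 := by
    rw [hω, show 2 * ↑π * I / (n:ℂ) = ↑(2 * π / n) * I by push_cast; ring]
    exact Complex.norm_exp_ofReal_mul_I _
  have hχω : χ * ω = 1 := by
    rw [hχ, mul_comm, Complex.mul_conj]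
    norm_cast
    rw [Complex.normSq_eq_norm_sq, hωabs]; norm_num
  have hχn : χ ^ n = 1 := by rw [hχ, ← _root_.map_pow, hωn, _root_.map_one]
  have hpow : ∀ a : ℕ, ω ^ a = ω ^ (a % n) := by
    intro a
    conv_lhs => rw [← Nat.mod_add_div a n, pow_add, pow_mul, hωn, one_pow, mul_one]
  have hmulinv : ∀ m : ℕ, χ ^ m * ω ^ m = 1 := by
    intro m; rw [← mul_pow, hχω, one_pow]
  set zh : Fin n → ℂ := fun k => ∑ j : Fin n, ω ^ (j.1 * k.1) * ζ j with hzh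
  have hconj : ∀ k : Fin n, (starRingEnd ℂ) (zh k) = ∑ j : Fin n, χ ^ (j.1 * k.1) * (starRingEnd ℂ) (ζ j) := by
    intro k
    rw [hzh]
    simp [_root_.map_sum, _root_.map_mul, _root_.map_pow, hχ]
  have hcond : ∀ (l : Fin n) (m : ℕ),
      (ω ^ l.1 * χ ^ m = 1) ↔ l = (⟨m % n, Nat.mod_lt _ hn⟩ : Fin n) := by
    intro l m
    constructor
    · intro h
      have h2 : ω ^ l.1 * (χ ^ m * ω ^ m) = ω ^ m := by
        rw [← mul_assoc, h, one_mul]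
      rw [hmulinv m, mul_one] at h2
      rw [hpow m] at h2
      exact Fin.ext (hprim.pow_inj l.2 (Nat.mod_lt _ hn) h2)
    · intro h
      subst h
      show ω ^ (m % n) * χ ^ m = 1
      rw [← hpow m, mul_comm, hmulinv m]
  have four : ∀ t : ℕ, ∑ k : Fin n, χ ^ (t * k.1) * ((starRingEnd ℂ) (zh k) * zh k)
      = (n : ℂ) * ∑ j : Fin n, (starRingEnd ℂ) (ζ j) * ζ ⟨(j.1 + t) % n, Nat.mod_lt _ hn⟩ := by
    intro t
    have step1 : ∀ k : Fin n, χ ^ (t * k.1) * ((starRingEnd ℂ) (zh k) * zh k)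
        = ∑ j : Fin n, ∑ l : Fin n,
            (ω ^ l.1 * χ ^ (j.1 + t)) ^ k.1 * ((starRingEnd ℂ) (ζ j) * ζ l) := by
      intro k
      rw [hconj k, show zh k = ∑ l : Fin n, ω ^ (l.1 * k.1) * ζ l from rfl,
        Finset.sum_mul_sum, Finset.mul_sum]
      apply Finset.sum_congr rfl; intro j _
      rw [Finset.mul_sum]
      apply Finset.sum_congr rfl; intro l _
      have hexp : (ω ^ l.1 * χ ^ (j.1 + t)) ^ k.1
          = ω ^ (l.1 * k.1) * (χ ^ (j.1 * k.1) * χ ^ (t * k.1)) := by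
        rw [mul_pow, ← pow_mul, ← pow_mul, Nat.add_mul, pow_add]
      rw [hexp]
      ring
    calc ∑ k : Fin n, χ ^ (t * k.1) * ((starRingEnd ℂ) (zh k) * zh k)
        = ∑ k : Fin n, ∑ j : Fin n, ∑ l : Fin n,
            (ω ^ l.1 * χ ^ (j.1 + t)) ^ k.1 * ((starRingEnd ℂ) (ζ j) * ζ l) :=
          Finset.sum_congr rfl fun k _ => step1 k
      _ = ∑ j : Fin n, ∑ l : Fin n, (∑ k : Fin n, (ω ^ l.1 * χ ^ (j.1 + t)) ^ k.1)
            * ((starRingEnd ℂ) (ζ j) * ζ l) := by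
          rw [Finset.sum_comm]
          apply Finset.sum_congr rfl; intro j _
          rw [Finset.sum_comm]
          apply Finset.sum_congr rfl; intro l _
          rw [Finset.sum_mul]
      _ = ∑ j : Fin n, ∑ l : Fin n,
            (if l = (⟨(j.1 + t) % n, Nat.mod_lt _ hn⟩ : Fin n) then (n:ℂ) else 0)
            * ((starRingEnd ℂ) (ζ j) * ζ l) := by
          apply Finset.sum_congr rfl; intro j _
          apply Finset.sum_congr rfl; intro l _
          have hη : (ω ^ l.1 * χ ^ (j.1 + t)) ^ n = 1 := by
            rw [mul_pow, ← pow_mul, ← pow_mul, mul_comm l.1 n, mul_comm (j.1+t) n,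
              pow_mul, pow_mul, hωn, hχn, one_pow, one_pow, one_mul]
          rw [root_sum n _ hη]
          simp only [hcond l (j.1 + t)]
      _ = ∑ j : Fin n, (n:ℂ) * ((starRingEnd ℂ) (ζ j) * ζ ⟨(j.1 + t) % n, Nat.mod_lt _ hn⟩) := by
          apply Finset.sum_congr rfl; intro j _
          simp only [ite_mul, zero_mul]
          rw [Finset.sum_ite_eq' Finset.univ _ (fun l => (n:ℂ) * ((starRingEnd ℂ) (ζ j) * ζ l))]
          simp
      _ = (n : ℂ) * ∑ j : Fin n, (starRingEnd ℂ) (ζ j) * ζ ⟨(j.1 + t) % n, Nat.mod_lt _ hn⟩ := by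
          rw [Finset.mul_sum]
  have hconjmul : ∀ z : ℂ, (starRingEnd ℂ) z * z = (Complex.normSq z : ℂ) := fun z => by
    rw [mul_comm]; exact Complex.mul_conj z
  have hid : ∀ j : Fin n, (⟨j.1 % n, Nat.mod_lt _ hn⟩ : Fin n) = j :=
    fun j => Fin.ext (Nat.mod_eq_of_lt j.2)
  have hP := four 0
  simp only [Nat.mul_zero, Nat.zero_mul, pow_zero, one_mul, Nat.add_zero, hid] at hP
  have hS := four 1
  simp only [Nat.one_mul, Nat.mul_one, one_mul] at hS
  have hnR : (0:ℝ) < (n:ℝ) := by exact_mod_cast hn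
  have hPr : ∑ k : Fin n, Complex.normSq (zh k) = (n:ℝ) * ∑ j : Fin n, Complex.normSq (ζ j) := by
    have hP' : ((∑ k : Fin n, Complex.normSq (zh k) : ℝ) : ℂ)
        = (((n:ℝ) * ∑ j : Fin n, Complex.normSq (ζ j) : ℝ) : ℂ) := by
      push_cast
      simp only [← hconjmul]
      exact hP
    exact_mod_cast hP'
  have pointwise : ∀ k : Fin n, (ε * χ ^ (k:ℕ)).re ≤ ε.re := by
    intro k
    have hεexp : Complex.exp (↑ε.arg * I) = ε := by
      have h := Complex.norm_mul_exp_arg_mul_I ε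
      rw [hεa] at h; simpa using h
    have hχk : χ ^ (k:ℕ) = Complex.exp (↑(-(2 * π * k / n)) * I) := by
      rw [hχ, ← _root_.map_pow, hω, ← Complex.exp_nat_mul, ← Complex.exp_conj]
      congr 1
      rw [show (k:ℂ) * (2 * ↑π * I / ↑n) = ↑((2 * π * k / n : ℝ)) * I by push_cast; ring]
      rw [_root_.map_mul, Complex.conj_I, Complex.conj_ofReal]
      push_cast; ring
    have hfull : ε * χ ^ (k:ℕ) = Complex.exp (↑(ε.arg - 2 * π * k / n) * I) := by
      conv_lhs => rw [← hεexp, hχk]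
      rw [← Complex.exp_add]
      congr 1
      push_cast; ring
    have hcosβ : Real.cos ε.arg = ε.re := by
      rw [← Complex.exp_ofReal_mul_I_re, hεexp]
    rw [hfull, Complex.exp_ofReal_mul_I_re, ← hcosβ]
    exact trig_bound n hn ε.arg (Complex.abs_arg_le_pi ε) (by rw [hcosβ]; exact hre) k k.2
  have lhs_eq : (n:ℝ) * (∑ i : Fin n, (ε * (starRingEnd ℂ) (ζ i) * ζ ⟨(i.1 + 1) % n, Nat.mod_lt _ hn⟩).re)
      = ∑ k : Fin n, ((ε * χ ^ (k:ℕ)).re * Complex.normSq (zh k)) := by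
    have hCeq : ((n:ℝ):ℂ) * (ε * ∑ i : Fin n, (starRingEnd ℂ) (ζ i) * ζ ⟨(i.1 + 1) % n, Nat.mod_lt _ hn⟩)
        = ∑ k : Fin n, ε * χ ^ (k:ℕ) * ((Complex.normSq (zh k) : ℝ) : ℂ) := by
      push_cast
      rw [mul_left_comm, ← hS, Finset.mul_sum]
      apply Finset.sum_congr rfl; intro k _
      rw [← hconjmul (zh k)]
      ring
    have := congrArg Complex.re hCeq
    rw [Complex.re_ofReal_mul, Finset.mul_sum, Complex.re_sum] at this
    rw [Complex.re_sum] at this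
    calc (n:ℝ) * (∑ i : Fin n, (ε * (starRingEnd ℂ) (ζ i) * ζ ⟨(i.1 + 1) % n, Nat.mod_lt _ hn⟩).re)
        = (n:ℝ) * (∑ i : Fin n, (ε * ((starRingEnd ℂ) (ζ i) * ζ ⟨(i.1 + 1) % n, Nat.mod_lt _ hn⟩)).re) := by
          simp only [mul_assoc]
      _ = ∑ k : Fin n, (ε * χ ^ (k:ℕ) * ((Complex.normSq (zh k) : ℝ) : ℂ)).re := this
      _ = ∑ k : Fin n, ((ε * χ ^ (k:ℕ)).re * Complex.normSq (zh k)) := by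
          apply Finset.sum_congr rfl; intro k _
          simp [Complex.mul_re, Complex.ofReal_re, Complex.ofReal_im]
  have rhs_eq : (n:ℝ) * (ε.re * ∑ i : Fin n, Complex.normSq (ζ i))
      = ∑ k : Fin n, ε.re * Complex.normSq (zh k) := by
    rw [← Finset.mul_sum, hPr]; ring
  have main : (n:ℝ) * (∑ i : Fin n, (ε * (starRingEnd ℂ) (ζ i) * ζ ⟨(i.1 + 1) % n, Nat.mod_lt _ hn⟩).re)
      ≤ (n:ℝ) * (ε.re * ∑ i : Fin n, Complex.normSq (ζ i)) := by
    rw [lhs_eq, rhs_eq]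
    apply Finset.sum_le_sum
    intro k _
    exact mul_le_mul_of_nonneg_right (pointwise k) (Complex.normSq_nonneg _)
  exact le_of_mul_le_mul_left main hnR


noncomputable section

def cross (x y : Fin 3 → ℝ) : Fin 3 → ℝ :=
  ![x 1 * y 2 - x 2 * y 1, x 2 * y 0 - x 0 * y 2, x 0 * y 1 - x 1 * y 0]

lemma cross_dot_left (x y : Fin 3 → ℝ) : x ⬝ᵥ cross x y = 0 := by
  simp [cross, dotProduct, Fin.sum_univ_three]; ring

lemma cross_dot_right (x y : Fin 3 → ℝ) : y ⬝ᵥ cross x y = 0 := by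
  simp [cross, dotProduct, Fin.sum_univ_three]; ring

lemma cross_norm (x y : Fin 3 → ℝ) :
    cross x y ⬝ᵥ cross x y = (x ⬝ᵥ x) * (y ⬝ᵥ y) - (x ⬝ᵥ y) ^ 2 := by
  simp [cross, dotProduct, Fin.sum_univ_three]; ring

lemma normalize_self (x : Fin 3 → ℝ) (hx : 0 < x ⬝ᵥ x) :
    ((Real.sqrt (x ⬝ᵥ x))⁻¹ • x) ⬝ᵥ ((Real.sqrt (x ⬝ᵥ x))⁻¹ • x) = 1 := by
  set s := Real.sqrt (x ⬝ᵥ x) with hs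
  have h2 : s * s = x ⬝ᵥ x := Real.mul_self_sqrt hx.le
  have hne : s ≠ 0 := (Real.sqrt_pos.mpr hx).ne'
  rw [smul_dotProduct, dotProduct_smul, smul_eq_mul, smul_eq_mul, ← h2]
  field_simp

/-- Orthonormal eigen-basis data for a special orthogonal 3×3 matrix. -/
lemma so3_basis (E : Matrix (Fin 3) (Fin 3) ℝ) (hE : Eᵀ * E = 1) (hdet : E.det = 1)
    (c : ℝ) (hc : 1/2 ≤ c) (htr : E.trace = 1 + 2 * c) :
    ∃ u w w' : Fin 3 → ℝ, ∃ b : ℝ,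
      u ⬝ᵥ u = 1 ∧ w ⬝ᵥ w = 1 ∧ w' ⬝ᵥ w' = 1 ∧
      u ⬝ᵥ w = 0 ∧ u ⬝ᵥ w' = 0 ∧ w ⬝ᵥ w' = 0 ∧
      (∀ x : Fin 3 → ℝ, (u ⬝ᵥ x) • u + (w ⬝ᵥ x) • w + (w' ⬝ᵥ x) • w' = x) ∧
      E *ᵥ u = u ∧ E *ᵥ w = c • w + b • w' ∧ E *ᵥ w' = (-b) • w + c • w' ∧
      c ^ 2 + b ^ 2 = 1 := by
  have hEET : E * Eᵀ = 1 := mul_eq_one_comm.mp hE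
  -- eigenvector for eigenvalue 1
  have hdet0 : (E - 1).det = 0 := by
    have h1 : Eᵀ * (E - 1) = (1 - E)ᵀ := by
      rw [Matrix.mul_sub, hE, Matrix.mul_one, Matrix.transpose_sub, Matrix.transpose_one]
    have h2 := congrArg Matrix.det h1
    rw [Matrix.det_mul, Matrix.det_transpose, hdet, one_mul, Matrix.det_transpose,
      show (1 : Matrix (Fin 3) (Fin 3) ℝ) - E = -(E - 1) from (neg_sub E 1).symm, Matrix.det_neg] at h2
    simp at h2
    linarith
  obtain ⟨v, hv0, hv⟩ := Matrix.exists_mulVec_eq_zero_iff.mpr hdet0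
  have hvv : 0 < v ⬝ᵥ v := by
    rcases lt_or_eq_of_le (Finset.sum_nonneg fun i _ => mul_self_nonneg (v i) :
      (0:ℝ) ≤ v ⬝ᵥ v) with h | h
    · exact h
    · exact absurd (dotProduct_self_eq_zero.mp h.symm) hv0
  have hEv : E *ᵥ v = v := by
    rw [Matrix.sub_mulVec, Matrix.one_mulVec, sub_eq_zero] at hv
    exact hv
  set u : Fin 3 → ℝ := (Real.sqrt (v ⬝ᵥ v))⁻¹ • v with hu_def
  have hsq : Real.sqrt (v ⬝ᵥ v) ^ 2 = v ⬝ᵥ v := Real.sq_sqrt hvv.le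
  have hsqpos : 0 < Real.sqrt (v ⬝ᵥ v) := Real.sqrt_pos.mpr hvv
  have huu : u ⬝ᵥ u = 1 := by
    rw [hu_def]; exact normalize_self v hvv
  have hEu : E *ᵥ u = u := by rw [hu_def, Matrix.mulVec_smul, hEv]
  -- construct w orthogonal to u
  have hm : ∃ m : Fin 3, (u m) ^ 2 ≤ 1/3 := by
    by_contra hcon
    push_neg at hcon
    have h0 := hcon 0; have h1 := hcon 1; have h2 := hcon 2
    have : u ⬝ᵥ u = u 0 * u 0 + u 1 * u 1 + u 2 * u 2 := by
      simp [dotProduct, Fin.sum_univ_three]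
    nlinarith
  obtain ⟨m, hm⟩ := hm
  set v1 : Fin 3 → ℝ := Pi.single m 1 - (u m) • u with hv1_def
  have huv1 : u ⬝ᵥ v1 = 0 := by
    rw [hv1_def, dotProduct_sub, dotProduct_smul, dotProduct_single, huu]
    simp
  have hv1v1 : v1 ⬝ᵥ v1 = 1 - (u m) ^ 2 := by
    have step : v1 ⬝ᵥ v1 = Pi.single m 1 ⬝ᵥ v1 - u m * (u ⬝ᵥ v1) := by
      rw [hv1_def, sub_dotProduct, smul_dotProduct, smul_eq_mul]
    rw [step, huv1, single_dotProduct, hv1_def]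
    simp [Pi.single_eq_same]
    ring
  have hv1pos : 0 < v1 ⬝ᵥ v1 := by rw [hv1v1]; nlinarith
  set w : Fin 3 → ℝ := (Real.sqrt (v1 ⬝ᵥ v1))⁻¹ • v1 with hw_def
  have hsq1 : Real.sqrt (v1 ⬝ᵥ v1) ^ 2 = v1 ⬝ᵥ v1 := Real.sq_sqrt hv1pos.le
  have hsq1pos : 0 < Real.sqrt (v1 ⬝ᵥ v1) := Real.sqrt_pos.mpr hv1pos
  have hww : w ⬝ᵥ w = 1 := by
    rw [hw_def]; exact normalize_self v1 hv1pos
  have huw : u ⬝ᵥ w = 0 := by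
    rw [hw_def, dotProduct_smul, huv1, smul_zero]
  set w' : Fin 3 → ℝ := cross u w with hw'_def
  have huw' : u ⬝ᵥ w' = 0 := cross_dot_left u w
  have hww' : w ⬝ᵥ w' = 0 := cross_dot_right u w
  have hw'w' : w' ⬝ᵥ w' = 1 := by
    rw [hw'_def, cross_norm, huu, hww, huw]; ring
  -- completeness
  set M : Matrix (Fin 3) (Fin 3) ℝ := Matrix.of ![u, w, w'] with hM_def
  have hdotsymm : ∀ x y : Fin 3 → ℝ, x ⬝ᵥ y = y ⬝ᵥ x := fun x y => dotProduct_comm x y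
  have hMMT : M * Mᵀ = 1 := by
    ext i j
    fin_cases i <;> fin_cases j <;>
      simp only [hM_def, Matrix.mul_apply, Matrix.transpose_apply, Matrix.of_apply,
        Matrix.cons_val_zero, Matrix.cons_val_one, Matrix.head_cons, Matrix.head_fin_const,
        Matrix.cons_val_two, Matrix.tail_cons, Matrix.one_apply] <;>
      simp only [show ∀ (f g : Fin 3 → ℝ), ∑ k, f k * g k = f ⬝ᵥ g from fun f g => rfl] <;>
      simp [huu, hww, hw'w', huw, huw', hww', hdotsymm w u, hdotsymm w' u, hdotsymm w' w]
  have hMTM : Mᵀ * M = 1 := mul_eq_one_comm.mp hMMT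
  have hcomp : ∀ x : Fin 3 → ℝ, (u ⬝ᵥ x) • u + (w ⬝ᵥ x) • w + (w' ⬝ᵥ x) • w' = x := by
    intro x
    have h := congrArg (fun N : Matrix (Fin 3) (Fin 3) ℝ => N *ᵥ x) hMTM
    simp only [Matrix.one_mulVec] at h
    rw [← Matrix.mulVec_mulVec] at h
    funext j
    have hj := congrFun h j
    simp only [hM_def, Matrix.mulVec, Matrix.transpose_apply, Matrix.of_apply, dotProduct,
      Fin.sum_univ_three, Matrix.cons_val_zero, Matrix.cons_val_one, Matrix.head_cons,
      Matrix.cons_val_two, Matrix.tail_cons] at hj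
    simp only [Pi.add_apply, Pi.smul_apply, smul_eq_mul, dotProduct, Fin.sum_univ_three]
    rw [← hj]
    ring
  -- E preserves dot products
  have hiso : ∀ x y : Fin 3 → ℝ, (E *ᵥ x) ⬝ᵥ (E *ᵥ y) = x ⬝ᵥ y := by
    intro x y
    rw [Matrix.dotProduct_mulVec, ← Matrix.mulVec_transpose, Matrix.mulVec_mulVec, hE,
      Matrix.one_mulVec]
  have hETu : Eᵀ *ᵥ u = u := by
    conv_lhs => rw [← hEu]
    rw [Matrix.mulVec_mulVec, hE, Matrix.one_mulVec]
  have huEx : ∀ x, u ⬝ᵥ (E *ᵥ x) = u ⬝ᵥ x := by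
    intro x
    rw [Matrix.dotProduct_mulVec, ← Matrix.mulVec_transpose, hETu]
  set a := w ⬝ᵥ (E *ᵥ w) with ha_def
  set b := w' ⬝ᵥ (E *ᵥ w) with hb_def
  set p := w ⬝ᵥ (E *ᵥ w') with hp_def
  set q := w' ⬝ᵥ (E *ᵥ w') with hq_def
  have hEw : E *ᵥ w = a • w + b • w' := by
    have h := hcomp (E *ᵥ w)
    rw [huEx w, huw, zero_smul, zero_add] at h
    exact h.symm
  have hEw' : E *ᵥ w' = p • w + q • w' := by
    have h := hcomp (E *ᵥ w')
    rw [huEx w', huw', zero_smul, zero_add] at h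
    exact h.symm
  have expand : ∀ α β γ δ : ℝ, (α • w + β • w') ⬝ᵥ (γ • w + δ • w') = α * γ + β * δ := by
    intro α β γ δ
    simp only [add_dotProduct, dotProduct_add, smul_dotProduct,
      dotProduct_smul, smul_eq_mul, hww, hw'w', hww', hdotsymm w' w]
    ring
  have hab : a ^ 2 + b ^ 2 = 1 := by
    have h := hiso w w
    rw [hEw, expand, hww] at h
    linear_combination h
  have hapbq : a * p + b * q = 0 := by
    have h := hiso w w'
    rw [hEw, hEw', expand, hww'] at h
    linear_combination h
  have hpq : p ^ 2 + q ^ 2 = 1 := by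
    have h := hiso w' w'
    rw [hEw', expand, hw'w'] at h
    linear_combination h
  -- trace computation
  set D : Matrix (Fin 3) (Fin 3) ℝ := Matrix.of ![![1,0,0],![0,a,p],![0,b,q]] with hD_def
  have hEMT : E * Mᵀ = Mᵀ * D := by
    ext i j
    rw [Matrix.mul_apply, Matrix.mul_apply]
    fin_cases j
    · have h := congrFun hEu i
      simp only [Matrix.mulVec, dotProduct, Fin.sum_univ_three] at h
      simp [hM_def, hD_def, Matrix.transpose_apply, Fin.sum_univ_three, Matrix.vecHead,
        Matrix.vecTail]
      linarith [h]
    · have h := congrFun hEw i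
      simp only [Matrix.mulVec, dotProduct, Fin.sum_univ_three, Pi.add_apply, Pi.smul_apply,
        smul_eq_mul] at h
      simp [hM_def, hD_def, Matrix.transpose_apply, Fin.sum_univ_three, Matrix.vecHead,
        Matrix.vecTail]
      linarith [h]
    · have h := congrFun hEw' i
      simp only [Matrix.mulVec, dotProduct, Fin.sum_univ_three, Pi.add_apply, Pi.smul_apply,
        smul_eq_mul] at h
      simp [hM_def, hD_def, Matrix.transpose_apply, Fin.sum_univ_three, Matrix.vecHead,
        Matrix.vecTail]
      linarith [h]
  have hE_decomp : E = Mᵀ * D * M := by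
    calc E = E * (Mᵀ * M) := by rw [hMTM, Matrix.mul_one]
      _ = (E * Mᵀ) * M := by rw [Matrix.mul_assoc]
      _ = Mᵀ * D * M := by rw [hEMT]
  have htr2 : 1 + a + q = 1 + 2 * c := by
    have h1 : (Mᵀ * D * M).trace = (D * (M * Mᵀ)).trace := by
      rw [Matrix.trace_mul_comm (Mᵀ * D) M, ← Matrix.mul_assoc, Matrix.trace_mul_comm]
    rw [hMMT, Matrix.mul_one] at h1
    have h2 : D.trace = 1 + a + q := by
      simp [hD_def, Matrix.trace_fin_three]
    rw [← h2, ← h1, ← hE_decomp, htr]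
  -- algebra: identify coefficients
  have hq2 : q ^ 2 = a ^ 2 := by
    linear_combination (-q^2) * hab + a^2 * hpq + (b*q - a*p) * hapbq
  have hqa : q = a := by
    rcases mul_eq_zero.mp (show (q - a) * (q + a) = 0 by linear_combination hq2) with h | h
    · linarith
    · exfalso; linarith
  have hac : a = c := by linarith
  have hcne : c ≠ 0 := by linarith
  have hbp : p = -b := by
    have h : c * p = c * (-b) := by
      rw [← hac]; linear_combination hapbq - b * hqa
    exact mul_left_cancel₀ hcne h
  refine ⟨u, w, w', b, huu, hww, hw'w', huw, huw', hww', hcomp, hEu, ?_, ?_, ?_⟩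
  · rw [hEw, hac]
  · rw [hEw', hqa, hac, hbp]
  · rw [← hac]; linear_combination hab

end


lemma quad_ineq (n : ℕ) (hn : 0 < n) (E : Matrix (Fin 3) (Fin 3) ℝ)
    (hE : Eᵀ * E = 1) (hdet : E.det = 1) (c : ℝ) (hc2 : 1/2 ≤ c)
    (hcn : Real.cos (π / n) ≤ c) (htr : E.trace = 1 + 2 * c)
    (z : Fin n → Fin 3 → ℝ) :
    ∑ i : Fin n, z i ⬝ᵥ (E *ᵥ z ⟨(i.1 + 1) % n, Nat.mod_lt _ hn⟩)
      ≤ ∑ i : Fin n, z i ⬝ᵥ (E *ᵥ z i) := by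
  obtain ⟨u, w, w', b, huu, hww, hw'w', huw, huw', hww', hcomp, hEu, hEw, hEw', hcb⟩ :=
    so3_basis E hE hdet c hc2 htr
  have hwu : w ⬝ᵥ u = 0 := by rw [dotProduct_comm]; exact huw
  have hw'u : w' ⬝ᵥ u = 0 := by rw [dotProduct_comm]; exact huw'
  have hw'w : w' ⬝ᵥ w = 0 := by rw [dotProduct_comm]; exact hww'
  have hgen : ∀ px qx rx py qy ry : ℝ,
      (px • u + qx • w + rx • w') ⬝ᵥ (E *ᵥ (py • u + qy • w + ry • w'))
        = px * py + (c * (qx * qy + rx * ry) + b * (rx * qy - qx * ry)) := by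
    intro px qx rx py qy ry
    rw [Matrix.mulVec_add, Matrix.mulVec_add, Matrix.mulVec_smul, Matrix.mulVec_smul,
      Matrix.mulVec_smul, hEu, hEw, hEw']
    simp only [smul_add, smul_smul, add_dotProduct, dotProduct_add,
      smul_dotProduct, dotProduct_smul, smul_eq_mul,
      huu, hww, hw'w', huw, huw', hww', hwu, hw'u, hw'w]
    ring
  have hkey : ∀ x y : Fin 3 → ℝ, x ⬝ᵥ (E *ᵥ y)
      = (u ⬝ᵥ x) * (u ⬝ᵥ y) + (c * ((w ⬝ᵥ x) * (w ⬝ᵥ y) + (w' ⬝ᵥ x) * (w' ⬝ᵥ y))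
          + b * ((w' ⬝ᵥ x) * (w ⬝ᵥ y) - (w ⬝ᵥ x) * (w' ⬝ᵥ y))) := by
    intro x y
    conv_lhs => rw [← hcomp x, ← hcomp y]
    rw [hgen]
  set σ : Fin n → Fin n := fun i => ⟨(i.1 + 1) % n, Nat.mod_lt _ hn⟩ with hσ
  have hσbij : Function.Bijective σ := by
    rw [← Finite.injective_iff_bijective]
    intro i j hij
    have hij' : (i.1 + 1) % n = (j.1 + 1) % n := congrArg Fin.val hij
    have hi := i.2; have hj := j.2
    apply Fin.ext
    rcases Nat.lt_or_ge (i.1 + 1) n with h1 | h1 <;>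
      rcases Nat.lt_or_ge (j.1 + 1) n with h2 | h2
    · rw [Nat.mod_eq_of_lt h1, Nat.mod_eq_of_lt h2] at hij'; omega
    · have h2' : j.1 + 1 = n := by omega
      rw [Nat.mod_eq_of_lt h1, h2', Nat.mod_self] at hij'; omega
    · have h1' : i.1 + 1 = n := by omega
      rw [Nat.mod_eq_of_lt h2, h1', Nat.mod_self] at hij'; omega
    · omega
  set P : Fin n → ℝ := fun i => u ⬝ᵥ z i with hP
  set ζ : Fin n → ℂ := fun i => ⟨w ⬝ᵥ z i, w' ⬝ᵥ z i⟩ with hζ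
  set ε : ℂ := ⟨c, b⟩ with hε
  have hεa : ‖ε‖ = 1 := by
    rw [Complex.norm_def, hε, Complex.normSq_mk]
    rw [show c * c + b * b = 1 by linear_combination hcb]
    exact Real.sqrt_one
  have hterm : ∀ i j : Fin n, (ε * (starRingEnd ℂ) (ζ i) * ζ j).re
      = c * ((w ⬝ᵥ z i) * (w ⬝ᵥ z j) + (w' ⬝ᵥ z i) * (w' ⬝ᵥ z j))
        + b * ((w' ⬝ᵥ z i) * (w ⬝ᵥ z j) - (w ⬝ᵥ z i) * (w' ⬝ᵥ z j)) := by
    intro i j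
    rw [hζ, hε]
    simp [Complex.mul_re, Complex.mul_im, Complex.conj_re, Complex.conj_im]
    ring
  have hnormSq : ∀ i : Fin n, Complex.normSq (ζ i) = (w ⬝ᵥ z i) * (w ⬝ᵥ z i) + (w' ⬝ᵥ z i) * (w' ⬝ᵥ z i) := by
    intro i; rw [hζ]; exact Complex.normSq_mk _ _
  -- axis part
  have hshift : ∑ i : Fin n, (P (σ i))^2 = ∑ i : Fin n, (P i)^2 :=
    hσbij.sum_comp (fun j => (P j)^2)
  have haxis : ∑ i : Fin n, P i * P (σ i) ≤ ∑ i : Fin n, (P i)^2 := by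
    have h0 : (0:ℝ) ≤ ∑ i : Fin n, (P i - P (σ i))^2 :=
      Finset.sum_nonneg fun i _ => sq_nonneg _
    have hexp : ∑ i : Fin n, (P i - P (σ i))^2
        = ∑ i : Fin n, (P i)^2 - 2 * ∑ i : Fin n, P i * P (σ i) + ∑ i : Fin n, (P (σ i))^2 := by
      calc ∑ i : Fin n, (P i - P (σ i))^2
          = ∑ i : Fin n, ((P i)^2 - 2 * (P i * P (σ i)) + (P (σ i))^2) :=
            Finset.sum_congr rfl fun i _ => by ring
        _ = ∑ i : Fin n, (P i)^2 - 2 * ∑ i : Fin n, P i * P (σ i) + ∑ i : Fin n, (P (σ i))^2 := by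
            rw [Finset.sum_add_distrib, Finset.sum_sub_distrib, ← Finset.mul_sum]
    rw [hexp, hshift] at h0
    linarith
  -- planar part
  have hplan := wirtinger n hn ε hεa (by rw [hε]; exact hcn) ζ
  -- put together
  have hLHS : ∑ i : Fin n, z i ⬝ᵥ (E *ᵥ z ⟨(i.1 + 1) % n, Nat.mod_lt _ hn⟩)
      = ∑ i : Fin n, P i * P (σ i) + ∑ i : Fin n, (ε * (starRingEnd ℂ) (ζ i) * ζ (σ i)).re := by
    rw [← Finset.sum_add_distrib]
    apply Finset.sum_congr rfl; intro i _
    rw [hkey, hterm i (σ i)]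
  have hRHS : ∑ i : Fin n, z i ⬝ᵥ (E *ᵥ z i)
      = ∑ i : Fin n, (P i)^2 + ε.re * ∑ i : Fin n, Complex.normSq (ζ i) := by
    rw [Finset.mul_sum, ← Finset.sum_add_distrib]
    apply Finset.sum_congr rfl; intro i _
    rw [hkey, hnormSq i, hε]
    simp only [hP]
    ring
  rw [hLHS, hRHS]
  have : ∑ i : Fin n, (ε * (starRingEnd ℂ) (ζ i) * ζ (σ i)).re
      ≤ ε.re * ∑ i : Fin n, Complex.normSq (ζ i) := hplan
  linarith


lemma trace_blocks (n : ℕ) (A : Matrix (Fin n × Fin 3) (Fin n × Fin 3) ℝ)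
    (Q : Matrix (Fin n × Fin 3) (Fin 3) ℝ) :
    (Qᵀ * A * Q).trace = ∑ i : Fin n, ∑ j : Fin n, ((blkv Q i)ᵀ * blk A i j * blkv Q j).trace := by
  simp only [Matrix.trace, Matrix.diag, Matrix.mul_apply, Matrix.transpose_apply, blk, blkv,
    Finset.sum_mul, Fintype.sum_prod_type]
  have swap : ∀ (f : Fin 3 → Fin n → Fin 3 → Fin n → Fin 3 → ℝ),
      ∑ b : Fin 3, ∑ j : Fin n, ∑ q : Fin 3, ∑ i : Fin n, ∑ p : Fin 3, f b j q i p
        = ∑ i : Fin n, ∑ j : Fin n, ∑ b : Fin 3, ∑ q : Fin 3, ∑ p : Fin 3, f b j q i p := by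
    intro f
    calc ∑ b : Fin 3, ∑ j : Fin n, ∑ q : Fin 3, ∑ i : Fin n, ∑ p : Fin 3, f b j q i p
        = ∑ j : Fin n, ∑ b : Fin 3, ∑ q : Fin 3, ∑ i : Fin n, ∑ p : Fin 3, f b j q i p :=
          Finset.sum_comm
      _ = ∑ j : Fin n, ∑ q : Fin 3, ∑ b : Fin 3, ∑ i : Fin n, ∑ p : Fin 3, f b j q i p :=
          Finset.sum_congr rfl fun j _ => Finset.sum_comm
      _ = ∑ j : Fin n, ∑ q : Fin 3, ∑ i : Fin n, ∑ b : Fin 3, ∑ p : Fin 3, f b j q i p :=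
          Finset.sum_congr rfl fun j _ => Finset.sum_congr rfl fun q _ => Finset.sum_comm
      _ = ∑ j : Fin n, ∑ i : Fin n, ∑ q : Fin 3, ∑ b : Fin 3, ∑ p : Fin 3, f b j q i p :=
          Finset.sum_congr rfl fun j _ => Finset.sum_comm
      _ = ∑ i : Fin n, ∑ j : Fin n, ∑ q : Fin 3, ∑ b : Fin 3, ∑ p : Fin 3, f b j q i p :=
          Finset.sum_comm
      _ = ∑ i : Fin n, ∑ j : Fin n, ∑ b : Fin 3, ∑ q : Fin 3, ∑ p : Fin 3, f b j q i p :=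
          Finset.sum_congr rfl fun i _ => Finset.sum_congr rfl fun j _ => Finset.sum_comm
  exact swap fun b j q i p => Q (i, p) b * A (i, p) (j, q) * Q (j, q) b


lemma col_trace (B C D : Matrix (Fin 3) (Fin 3) ℝ) :
    (Bᵀ * C * D).trace = ∑ a : Fin 3, (fun p => B p a) ⬝ᵥ (C *ᵥ (fun q => D q a)) := by
  simp only [Matrix.trace, Matrix.diag, Matrix.mul_apply, Matrix.transpose_apply,
    dotProduct, Matrix.mulVec, Finset.sum_mul, Finset.mul_sum]
  apply Finset.sum_congr rfl; intro a _
  rw [Finset.sum_comm]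
  apply Finset.sum_congr rfl; intro p _
  apply Finset.sum_congr rfl; intro q _
  ring


theorem stmt16 (n : ℕ) (hn : 3 ≤ n)
    (Rt : Fin n → Matrix (Fin 3) (Fin 3) ℝ)
    (hRt : ∀ i, (Rt i)ᵀ * Rt i = 1 ∧ (Rt i).det = 1)
    (A : Matrix (Fin n × Fin 3) (Fin n × Fin 3) ℝ)
    (hA : ∀ i j : Fin n, blk A i j =
      if (i.1 + 1) % n = j.1 then Rt i
      else if (j.1 + 1) % n = i.1 then (Rt j)ᵀ else 0)
    (γ : ℝ) (hγ : γ ∈ Set.Icc (-π) π)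
    (hEtr : ((List.ofFn Rt).prod).trace = 1 + 2 * Real.cos γ)
    (E0 : Matrix (Fin 3) (Fin 3) ℝ)
    (hE0so : E0ᵀ * E0 = 1 ∧ E0.det = 1)
    (hE0n : E0 ^ n = (List.ofFn Rt).prod)
    (hE0tr : E0.trace = 1 + 2 * Real.cos (γ / n))
    (Rstar : Fin n → Matrix (Fin 3) (Fin 3) ℝ)
    (hRstar : ∀ i : Fin n, Rstar i =
      (((List.range i.1).map fun s => Rt ⟨s % n, Nat.mod_lt s (by omega)⟩).prod)ᵀ *
        E0 ^ i.1)
    (Rb : Matrix (Fin n × Fin 3) (Fin 3) ℝ)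
    (hRb : ∀ (i : Fin n) (a b : Fin 3), Rb (i, a) b = Rstar i a b) :
    (∀ Q : Matrix (Fin n × Fin 3) (Fin 3) ℝ,
        (∀ i : Fin n, (blkv Q i)ᵀ * blkv Q i = 1 ∧ (blkv Q i).det = 1) →
        -(Rbᵀ * A * Rb).trace ≤ -(Qᵀ * A * Q).trace) ∧
    (∀ i : Fin n,
      (Rt i * Rstar ⟨(i.1 + 1) % n, Nat.mod_lt _ (by omega)⟩ * (Rstar i)ᵀ).trace =
        1 + 2 * Real.cos (γ / n)) := by
  have hn0 : 0 < n := by omega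
  obtain ⟨hγ1, hγ2⟩ := hγ
  have hπ := Real.pi_pos
  have hnR : (0:ℝ) < (n:ℝ) := by exact_mod_cast hn0
  have hn3 : (3:ℝ) ≤ (n:ℝ) := by exact_mod_cast hn
  set c := Real.cos (γ / n) with hc_def
  have hγabs : |γ| ≤ π := abs_le.mpr ⟨hγ1, hγ2⟩
  have hγn : |γ / n| ≤ π / n := by
    rw [abs_div, abs_of_pos hnR]
    rw [div_le_div_iff₀ hnR hnR]
    nlinarith [mul_le_mul_of_nonneg_right hγabs hnR.le]
  have hπn_le : π / n ≤ π := by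
    rw [div_le_iff₀ hnR]; nlinarith
  have hπn3 : π / n ≤ π / 3 := by
    rw [div_le_div_iff₀ hnR (by norm_num : (0:ℝ) < 3)]; nlinarith
  have hγn3 : |γ / n| ≤ π / 3 := hγn.trans hπn3
  have hc2 : 1/2 ≤ c := by
    rw [hc_def, ← Real.cos_abs]
    have h := Real.cos_le_cos_of_nonneg_of_le_pi (abs_nonneg (γ / n))
      (by linarith : π / 3 ≤ π) hγn3
    rw [Real.cos_pi_div_three] at h
    exact h
  have hcn : Real.cos (π / n) ≤ c := by
    rw [hc_def, ← Real.cos_abs (γ / n)]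
    exact Real.cos_le_cos_of_nonneg_of_le_pi (abs_nonneg (γ / n)) hπn_le hγn
  -- product prefixes
  set f : ℕ → Matrix (Fin 3) (Fin 3) ℝ := fun s => Rt ⟨s % n, Nat.mod_lt s hn0⟩ with hf_def
  set P : ℕ → Matrix (Fin 3) (Fin 3) ℝ := fun m => ((List.range m).map f).prod with hP_def
  have hRs : ∀ i : Fin n, Rstar i = (P i.1)ᵀ * E0 ^ i.1 := fun i => hRstar i
  have hfRt : ∀ i : Fin n, f i.1 = Rt i := by
    intro i
    rw [hf_def]
    exact congrArg Rt (Fin.ext (Nat.mod_eq_of_lt i.2))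
  have hPsucc : ∀ m, P (m + 1) = P m * f m := by
    intro m
    rw [hP_def]
    simp [List.range_succ]
  have hP0 : P 0 = 1 := by simp [hP_def]
  have hsos : ∀ X : Matrix (Fin 3) (Fin 3) ℝ, Xᵀ * X = 1 → X * Xᵀ = 1 :=
    fun X h => mul_eq_one_comm.mp h
  have hPorth : ∀ m, (P m)ᵀ * P m = 1 := by
    intro m
    induction m with
    | zero => rw [hP0]; simp
    | succ m ih =>
      rw [hPsucc, Matrix.transpose_mul]
      have hfm : (f m)ᵀ * f m = 1 := (hRt _).1
      calc (f m)ᵀ * (P m)ᵀ * (P m * f m) = (f m)ᵀ * ((P m)ᵀ * P m) * f m := by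
            noncomm_ring
        _ = 1 := by rw [ih, Matrix.mul_one, hfm]
  have hE0pow : ∀ k : ℕ, (E0 ^ k)ᵀ * E0 ^ k = 1 := by
    intro k
    induction k with
    | zero => simp
    | succ k ih =>
      rw [pow_succ, Matrix.transpose_mul]
      calc E0ᵀ * (E0 ^ k)ᵀ * (E0 ^ k * E0) = E0ᵀ * ((E0 ^ k)ᵀ * E0 ^ k) * E0 := by
            noncomm_ring
        _ = 1 := by rw [ih, Matrix.mul_one, hE0so.1]
  have hRsorth : ∀ i : Fin n, (Rstar i)ᵀ * Rstar i = 1 := by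
    intro i
    rw [hRs i, Matrix.transpose_mul, Matrix.transpose_transpose]
    calc (E0 ^ i.1)ᵀ * P i.1 * ((P i.1)ᵀ * E0 ^ i.1)
        = (E0 ^ i.1)ᵀ * (P i.1 * (P i.1)ᵀ) * E0 ^ i.1 := by noncomm_ring
      _ = 1 := by rw [hsos _ (hPorth _), Matrix.mul_one, hE0pow]
  have hofFn : (List.ofFn Rt).prod = P n := by
    rw [hP_def]
    congr 1
    apply List.ext_getElem
    · simp
    · intro i h1 h2
      simp only [List.getElem_ofFn, List.getElem_map, List.getElem_range]
      rw [List.length_ofFn] at h1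
      exact (congrArg Rt (Fin.ext (Nat.mod_eq_of_lt h1))).symm
  have hE0n' : E0 ^ n = P n := by rw [hE0n, hofFn]
  set σ : Fin n → Fin n := fun i => ⟨(i.1 + 1) % n, Nat.mod_lt _ hn0⟩ with hσ_def
  have hkeyR : ∀ i : Fin n, (Rstar i)ᵀ * Rt i * Rstar (σ i) = E0 := by
    intro i
    have hPi : P i.1 * Rt i = P (i.1 + 1) := by rw [hPsucc, hfRt]
    have hRsT : (Rstar i)ᵀ = (E0 ^ i.1)ᵀ * P i.1 := by
      rw [hRs i, Matrix.transpose_mul, Matrix.transpose_transpose]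
    rcases Nat.lt_or_ge (i.1 + 1) n with h | h
    · have hσval : (σ i).1 = i.1 + 1 := by
        simp only [hσ_def]; exact Nat.mod_eq_of_lt h
      have hσi : Rstar (σ i) = (P (i.1 + 1))ᵀ * E0 ^ (i.1 + 1) := by
        rw [hRs (σ i), hσval]
      rw [hRsT, hσi]
      calc (E0 ^ i.1)ᵀ * P i.1 * Rt i * ((P (i.1 + 1))ᵀ * E0 ^ (i.1 + 1))
          = (E0 ^ i.1)ᵀ * ((P i.1 * Rt i) * (P (i.1 + 1))ᵀ) * E0 ^ (i.1 + 1) := by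
            noncomm_ring
        _ = (E0 ^ i.1)ᵀ * E0 ^ (i.1 + 1) := by
            rw [hPi, hsos _ (hPorth _), Matrix.mul_one]
        _ = E0 := by rw [pow_succ, ← Matrix.mul_assoc, hE0pow, Matrix.one_mul]
    · have hin : i.1 + 1 = n := by omega
      have hσval : (σ i).1 = 0 := by
        simp only [hσ_def]; rw [hin, Nat.mod_self]
      have hσi : Rstar (σ i) = 1 := by
        rw [hRs (σ i), hσval, hP0, pow_zero, Matrix.transpose_one, Matrix.one_mul]
      rw [hRsT, hσi, Matrix.mul_one]
      calc (E0 ^ i.1)ᵀ * P i.1 * Rt i = (E0 ^ i.1)ᵀ * P (i.1 + 1) := by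
            rw [Matrix.mul_assoc, hPi]
        _ = (E0 ^ i.1)ᵀ * E0 ^ (i.1 + 1) := by rw [hin, hE0n']
        _ = E0 := by rw [pow_succ, ← Matrix.mul_assoc, hE0pow, Matrix.one_mul]
  have hkey2 : ∀ i : Fin n, Rt i * Rstar (σ i) = Rstar i * E0 := by
    intro i
    have h := congrArg (fun X => Rstar i * X) (hkeyR i)
    rw [← Matrix.mul_assoc, ← Matrix.mul_assoc, hsos _ (hRsorth i), Matrix.one_mul] at h
    exact h
  constructor
  · -- global optimality
    intro Q hQ
    -- general expansion
    have hU : ∀ S : Matrix (Fin n × Fin 3) (Fin 3) ℝ, (Sᵀ * A * S).trace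
        = 2 * ∑ i : Fin n, ((blkv S i)ᵀ * Rt i * blkv S (σ i)).trace := by
      intro S
      rw [trace_blocks n A S]
      have hnocyc : ∀ i j : Fin n, (i.1 + 1) % n = j.1 → (j.1 + 1) % n = i.1 → False := by
        intro i j h1 h2
        have hi := i.2; have hj := j.2
        rcases Nat.lt_or_ge (i.1 + 1) n with hi1 | hi1 <;>
          rcases Nat.lt_or_ge (j.1 + 1) n with hj1 | hj1
        · rw [Nat.mod_eq_of_lt hi1] at h1; rw [Nat.mod_eq_of_lt hj1] at h2; omega
        · have : j.1 + 1 = n := by omega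
          rw [Nat.mod_eq_of_lt hi1] at h1; rw [this, Nat.mod_self] at h2; omega
        · have : i.1 + 1 = n := by omega
          rw [Nat.mod_eq_of_lt hj1] at h2; rw [this, Nat.mod_self] at h1; omega
        · have h3 : i.1 + 1 = n := by omega
          have h4 : j.1 + 1 = n := by omega
          rw [h3, Nat.mod_self] at h1; rw [h4, Nat.mod_self] at h2; omega
      have hT : ∀ i j : Fin n, ((blkv S i)ᵀ * blk A i j * blkv S j).trace
          = (if j = σ i then ((blkv S i)ᵀ * Rt i * blkv S (σ i)).trace else 0)
            + (if i = σ j then ((blkv S (σ j))ᵀ * (Rt j)ᵀ * blkv S j).trace else 0) := by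
        intro i j
        rw [hA i j]
        by_cases h1 : (i.1 + 1) % n = j.1
        · have hj : j = σ i := Fin.ext (by simp only [hσ_def]; exact h1.symm)
          have h2 : ¬ (j.1 + 1) % n = i.1 := fun h2 => hnocyc i j h1 h2
          have hiσ : ¬ i = σ j := by
            intro hc
            apply h2
            rw [hc]
          rw [if_pos h1, if_pos hj, if_neg hiσ, add_zero, hj]
        · have hjσ : ¬ j = σ i := by
            intro hc
            apply h1
            rw [hc]
          rw [if_neg h1, if_neg hjσ, zero_add]
          by_cases h2 : (j.1 + 1) % n = i.1
          · have hiσ : i = σ j := Fin.ext (by simp only [hσ_def]; exact h2.symm)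
            rw [if_pos h2, if_pos hiσ, hiσ]
          · have hiσ : ¬ i = σ j := by
              intro hc
              apply h2
              rw [hc]
            rw [if_neg h2, if_neg hiσ]
            simp
      set U : Fin n → ℝ := fun i => ((blkv S i)ᵀ * Rt i * blkv S (σ i)).trace with hUdef
      set V : Fin n → ℝ := fun j => ((blkv S (σ j))ᵀ * (Rt j)ᵀ * blkv S j).trace with hVdef
      have hVU : ∀ j : Fin n, V j = U j := by
        intro j
        rw [hUdef, hVdef]
        simp only
        have htx : (blkv S (σ j))ᵀ * (Rt j)ᵀ * blkv S j
            = ((blkv S j)ᵀ * Rt j * blkv S (σ j))ᵀ := by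
          rw [Matrix.transpose_mul, Matrix.transpose_mul, Matrix.transpose_transpose]
          noncomm_ring
        rw [htx, Matrix.trace_transpose]
      calc ∑ i : Fin n, ∑ j : Fin n, ((blkv S i)ᵀ * blk A i j * blkv S j).trace
          = ∑ i : Fin n, ∑ j : Fin n,
              ((if j = σ i then U i else 0) + (if i = σ j then V j else 0)) :=
            Finset.sum_congr rfl fun i _ => Finset.sum_congr rfl fun j _ => hT i j
        _ = ∑ i : Fin n, (U i + ∑ j : Fin n, (if i = σ j then V j else 0)) := by
            apply Finset.sum_congr rfl; intro i _
            rw [Finset.sum_add_distrib, Finset.sum_ite_eq' Finset.univ (σ i) (fun _ => U i)]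
            simp
        _ = ∑ i : Fin n, U i + ∑ i : Fin n, ∑ j : Fin n, (if i = σ j then V j else 0) :=
            Finset.sum_add_distrib
        _ = ∑ i : Fin n, U i + ∑ j : Fin n, ∑ i : Fin n, (if i = σ j then V j else 0) := by
            rw [Finset.sum_comm]
        _ = ∑ i : Fin n, U i + ∑ j : Fin n, V j := by
            congr 1
            apply Finset.sum_congr rfl; intro j _
            rw [Finset.sum_ite_eq' Finset.univ (σ j) (fun _ => V j)]
            simp
        _ = ∑ i : Fin n, U i + ∑ j : Fin n, U j :=  by
            rw [Finset.sum_congr rfl fun j _ => hVU j]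
        _ = 2 * ∑ i : Fin n, U i := by ring
    -- value at Rb
    have hblkRb : ∀ i : Fin n, blkv Rb i = Rstar i := by
      intro i; funext a b; exact hRb i a b
    have hcard : ∑ _i : Fin n, E0.trace = (n : ℝ) * E0.trace := by
      rw [Finset.sum_const, Finset.card_univ, Fintype.card_fin, nsmul_eq_mul]
    have hRbtr : (Rbᵀ * A * Rb).trace = 2 * ((n : ℝ) * E0.trace) := by
      rw [hU Rb]
      congr 1
      calc ∑ i : Fin n, ((blkv Rb i)ᵀ * Rt i * blkv Rb (σ i)).trace
          = ∑ _i : Fin n, E0.trace := by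
            apply Finset.sum_congr rfl; intro i _
            rw [hblkRb, hblkRb, hkeyR i]
        _ = (n : ℝ) * E0.trace := hcard
    -- value bound at Q
    have hQ1 : ∀ i, (blkv Q i)ᵀ * blkv Q i = 1 := fun i => (hQ i).1
    have hQ2 : ∀ i, blkv Q i * (blkv Q i)ᵀ = 1 := fun i => hsos _ (hQ1 i)
    have hRs2 : ∀ i, Rstar i * (Rstar i)ᵀ = 1 := fun i => hsos _ (hRsorth i)
    set z : Fin 3 → Fin n → (Fin 3 → ℝ) :=
      fun a i => (Rstar i)ᵀ *ᵥ (fun p => blkv Q i p a) with hz_def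
    have hmat : ∀ i : Fin n, Rstar i * E0 * (Rstar (σ i))ᵀ = Rt i := by
      intro i
      rw [← hkey2 i, Matrix.mul_assoc, hRs2 (σ i), Matrix.mul_one]
    have hcol : ∀ (i : Fin n) (a : Fin 3),
        (fun p => blkv Q i p a) ⬝ᵥ (Rt i *ᵥ (fun q => blkv Q (σ i) q a))
          = z a i ⬝ᵥ (E0 *ᵥ z a (σ i)) := by
      intro i a
      rw [hz_def]
      simp only
      conv_rhs => rw [Matrix.mulVec_transpose, ← Matrix.dotProduct_mulVec,
        Matrix.mulVec_mulVec, Matrix.mulVec_mulVec, hmat i]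
    have hUz : ∀ i, ((blkv Q i)ᵀ * Rt i * blkv Q (σ i)).trace
        = ∑ a : Fin 3, z a i ⬝ᵥ (E0 *ᵥ z a (σ i)) := by
      intro i
      rw [col_trace]
      exact Finset.sum_congr rfl fun a _ => hcol i a
    have hdiag : ∀ i : Fin n, ∑ a : Fin 3, z a i ⬝ᵥ (E0 *ᵥ z a i) = E0.trace := by
      intro i
      have h1 : ∀ a : Fin 3, z a i ⬝ᵥ (E0 *ᵥ z a i)
          = (fun p => blkv Q i p a) ⬝ᵥ ((Rstar i * E0 * (Rstar i)ᵀ) *ᵥ (fun q => blkv Q i q a)) := by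
        intro a
        conv_rhs => rw [← Matrix.mulVec_mulVec, ← Matrix.mulVec_mulVec,
          Matrix.dotProduct_mulVec, ← Matrix.mulVec_transpose]
      rw [Finset.sum_congr rfl fun a _ => h1 a, ← col_trace,
        Matrix.trace_mul_comm ((blkv Q i)ᵀ * (Rstar i * E0 * (Rstar i)ᵀ)) (blkv Q i),
        ← Matrix.mul_assoc, hQ2 i, Matrix.one_mul,
        Matrix.trace_mul_comm (Rstar i * E0) ((Rstar i)ᵀ),
        ← Matrix.mul_assoc, hRsorth i, Matrix.one_mul]
    have hsum : ∑ i : Fin n, ((blkv Q i)ᵀ * Rt i * blkv Q (σ i)).trace ≤ (n : ℝ) * E0.trace := by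
      calc ∑ i : Fin n, ((blkv Q i)ᵀ * Rt i * blkv Q (σ i)).trace
          = ∑ i : Fin n, ∑ a : Fin 3, z a i ⬝ᵥ (E0 *ᵥ z a (σ i)) :=
            Finset.sum_congr rfl fun i _ => hUz i
        _ = ∑ a : Fin 3, ∑ i : Fin n, z a i ⬝ᵥ (E0 *ᵥ z a (σ i)) := Finset.sum_comm
        _ ≤ ∑ a : Fin 3, ∑ i : Fin n, z a i ⬝ᵥ (E0 *ᵥ z a i) :=
            Finset.sum_le_sum fun a _ =>
              quad_ineq n hn0 E0 hE0so.1 hE0so.2 c hc2 hcn hE0tr (z a)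
        _ = ∑ i : Fin n, ∑ a : Fin 3, z a i ⬝ᵥ (E0 *ᵥ z a i) := Finset.sum_comm
        _ = ∑ _i : Fin n, E0.trace := Finset.sum_congr rfl fun i _ => hdiag i
        _ = (n : ℝ) * E0.trace := hcard
    have hQtr : (Qᵀ * A * Q).trace ≤ (Rbᵀ * A * Rb).trace := by
      rw [hU Q, hRbtr]
      linarith [hsum]
    exact neg_le_neg hQtr
  · -- residual angles
    intro i
    show (Rt i * Rstar (σ i) * (Rstar i)ᵀ).trace = 1 + 2 * Real.cos (γ / n)
    rw [hkey2 i, Matrix.trace_mul_comm, ← Matrix.mul_assoc, hRsorth i, Matrix.one_mul, hE0tr]
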